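/- arXiv:1809.07816 — 2 statements merged into one kernel-verified Lean document; each statement's English description precedes it below -/
import Mathlib

section
/- Let n ≥ 2, let ω, ω' be members of {β_1⁻,…,β_{n−1}⁻, β, β_1⁺,…,β_{n−1}⁺}, and let S be a subalgebra of Z_{2n}² which is maximal with respect to inclusion among subalgebras of Z_{2n}² contained in (ω, ω')⁻¹(≤). Then there exist a partial endomorphism h of Z_{2n} and an integer m with 0 ≤ m ≤ n such that S = {(x,y) : x ∈ dom h and h(x) ≈_m y} or S = {(x,y) : y ∈ dom h and h(y) ≈_m x}. Moreover, if ω ∈ {β_1⁻,…,β_{n−1}⁻, β} and ω' ∈ {β, β_1⁺,…,β_{n−1}⁺}, then S is the graph of a partial endomorphism of Z_{2n} (the case m = 0). -/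
/-- Sugihara implication on the integers. -/
def SImp (a b : ℤ) : ℤ := if a ≤ b then max (-a) b else min (-a) b

/-- The universe of the Sugihara algebra `Z_{2n+1}`. -/
def Zodd (n : ℕ) : Set ℤ := {a : ℤ | -(n : ℤ) ≤ a ∧ a ≤ (n : ℤ)}

/-- The universe of the Sugihara algebra `Z_{2n}`. -/
def Zeven (n : ℕ) : Set ℤ := {a : ℤ | (-(n : ℤ) ≤ a ∧ a ≤ (n : ℤ)) ∧ a ≠ 0}

/-- `S` is a subalgebra of (the subset `Z` of) the Sugihara algebra on `ℤ`. -/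
def Subalg (Z S : Set ℤ) : Prop :=
  S.Nonempty ∧ S ⊆ Z ∧
    ∀ a ∈ S, ∀ b ∈ S, min a b ∈ S ∧ max a b ∈ S ∧ -a ∈ S ∧ SImp a b ∈ S

/-- `h` is a homomorphism from `S` to `T` (preserving ∧, ∨, ¬, →). -/
def SHom (S T : Set ℤ) (h : ℤ → ℤ) : Prop :=
  Set.MapsTo h S T ∧
    ∀ a ∈ S, ∀ b ∈ S,
      h (min a b) = min (h a) (h b) ∧ h (max a b) = max (h a) (h b) ∧
      h (-a) = -h a ∧ h (SImp a b) = SImp (h a) (h b)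

/-- `h` with domain `D` is a partial endomorphism of (the algebra on) `Z`. -/
def PartialEnd (Z D : Set ℤ) (h : ℤ → ℤ) : Prop :=
  Subalg Z D ∧ Subalg Z (h '' D) ∧ SHom D (h '' D) h

/-- The relation `≈_m`. -/
def eqm (m : ℕ) (a b : ℤ) : Prop := a = b ∨ (|a| ≤ (m : ℤ) ∧ |b| ≤ (m : ℤ))

/-- `S` is a subalgebra of `Z²` (coordinatewise operations). -/
def Subalg2 (Z : Set ℤ) (S : Set (ℤ × ℤ)) : Prop :=
  S.Nonempty ∧ S ⊆ Z ×ˢ Z ∧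
    ∀ p ∈ S, ∀ q ∈ S,
      (min p.1 q.1, min p.2 q.2) ∈ S ∧ (max p.1 q.1, max p.2 q.2) ∈ S ∧
      (-p.1, -p.2) ∈ S ∧ (SImp p.1 q.1, SImp p.2 q.2) ∈ S

/-- The map `β_i⁻`. -/
def betaM (i : ℕ) (a : ℤ) : ℤ := if -(i : ℤ) ≤ a then 1 else 0

/-- The map `β_i⁺`. -/
def betaP (i : ℕ) (a : ℤ) : ℤ := if (i : ℤ) < a then 1 else 0

/-- The map `β`. -/
def betaF (a : ℤ) : ℤ := if 0 < a then 1 else 0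

/-- `ω` is one of the maps `β_1⁻, …, β_{n-1}⁻`. -/
def IsBetaM (n : ℕ) (ω : ℤ → ℤ) : Prop := ∃ i : ℕ, 1 ≤ i ∧ i ≤ n - 1 ∧ ω = betaM i

/-- `ω` is one of the maps `β_1⁺, …, β_{n-1}⁺`. -/
def IsBetaP (n : ℕ) (ω : ℤ → ℤ) : Prop := ∃ i : ℕ, 1 ≤ i ∧ i ≤ n - 1 ∧ ω = betaP i

/-- `ω` is a member of `{β_1⁻, …, β_{n-1}⁻, β, β_1⁺, …, β_{n-1}⁺}`. -/
def IsBeta (n : ℕ) (ω : ℤ → ℤ) : Prop := ω = betaF ∨ IsBetaM n ω ∨ IsBetaP n ω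

/- ## auxiliary -/

lemma SImp_eq (a b : ℤ) : SImp a b = if |b| < |a| then -a else if a = b then |a| else b := by
  unfold SImp; simp only [max_def, min_def, Int.abs_eq_natAbs]; split_ifs <;> omega

lemma SImp_big (a b : ℤ) (h : |a| < |b|) : SImp a b = b := by
  rw [SImp_eq]; simp only [Int.abs_eq_natAbs] at *; split_ifs <;> omega

lemma SImp_small (a b : ℤ) (h : |b| < |a|) : SImp a b = -a := by
  rw [SImp_eq]; simp only [Int.abs_eq_natAbs] at *; split_ifs <;> omega

lemma SImp_self (a : ℤ) : SImp a a = |a| := by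
  rw [SImp_eq]; simp only [Int.abs_eq_natAbs] at *; split_ifs <;> omega

lemma SImp_cases (a b : ℤ) : SImp a b = -a ∨ SImp a b = b ∨ SImp a b = |a| := by
  rw [SImp_eq]; split_ifs <;> tauto

def Upset (U : Set ℤ) : Prop := ∀ a b : ℤ, a ∈ U → a ≤ b → b ∈ U

def MSet (S : Set (ℤ × ℤ)) : Set ℕ := {k | ∃ x, (x, (k:ℤ)) ∈ S ∧ (x, -(k:ℤ)) ∈ S}

noncomputable def mOf (S : Set (ℤ × ℤ)) : ℕ := sSup (MSet S)

def ASet (S : Set (ℤ × ℤ)) : Set ℕ :=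
  {k | ∃ y, ((k:ℤ), y) ∈ S ∧ ∀ y', ((k:ℤ), y') ∈ S → |y'| ≤ (mOf S : ℤ)}

noncomputable def aOf (S : Set (ℤ × ℤ)) : ℕ := sSup (ASet S)

section Core

variable {n : ℕ} {S : Set (ℤ × ℤ)}

lemma memZ (hS : Subalg2 (Zeven n) S) {p : ℤ × ℤ} (hp : p ∈ S) :
    p.1 ≠ 0 ∧ |p.1| ≤ (n:ℤ) ∧ p.2 ≠ 0 ∧ |p.2| ≤ (n:ℤ) := by
  have := hS.2.1 hp
  simp only [Set.mem_prod, Zeven, Set.mem_setOf_eq] at this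
  obtain ⟨⟨⟨h1, h2⟩, h3⟩, ⟨⟨h4, h5⟩, h6⟩⟩ := this
  simp only [Int.abs_eq_natAbs]
  refine ⟨h3, by omega, h6, by omega⟩

lemma neg_mem (hS : Subalg2 (Zeven n) S) {a b : ℤ} (h : (a, b) ∈ S) : (-a, -b) ∈ S :=
  (hS.2.2 _ h _ h).2.2.1

lemma simp_mem (hS : Subalg2 (Zeven n) S) {a b c d : ℤ} (h : (a, b) ∈ S) (h' : (c, d) ∈ S) :
    (SImp a c, SImp b d) ∈ S :=
  (hS.2.2 _ h _ h').2.2.2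

lemma MSet_bdd (hS : Subalg2 (Zeven n) S) : BddAbove (MSet S) := by
  refine ⟨n, fun k hk => ?_⟩
  obtain ⟨x, h1, _⟩ := hk
  have := (memZ hS h1).2.2.2
  simp only [Int.abs_eq_natAbs] at this; omega

lemma ASet_bdd (hS : Subalg2 (Zeven n) S) : BddAbove (ASet S) := by
  refine ⟨n, fun k hk => ?_⟩
  obtain ⟨y, h1, _⟩ := hk
  have := (memZ hS h1).2.1
  simp only [Int.abs_eq_natAbs] at this; omega

lemma mem_MSet_le (hS : Subalg2 (Zeven n) S) {k : ℕ} (h : k ∈ MSet S) : k ≤ mOf S :=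
  le_csSup (MSet_bdd hS) h

lemma mem_ASet_le (hS : Subalg2 (Zeven n) S) {k : ℕ} (h : k ∈ ASet S) : k ≤ aOf S :=
  le_csSup (ASet_bdd hS) h

/-- L2 : two distinct elements in a fiber force the larger magnitude to be ≤ m. -/
lemma sym_le (hS : Subalg2 (Zeven n) S) {x y y' : ℤ} (h : (x, y) ∈ S) (h' : (x, y') ∈ S)
    (hne : y ≠ y') (hle : |y| ≤ |y'|) : |y'| ≤ (mOf S : ℤ) := by
  have hy' : y' ≠ 0 := (memZ hS h').2.2.1
  have e1 : SImp y y' = y' := by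
    rw [SImp_eq]; simp only [Int.abs_eq_natAbs] at *; split_ifs <;> omega
  have e2 : SImp y' y = -y' := by
    rw [SImp_eq]; simp only [Int.abs_eq_natAbs] at *; split_ifs <;> omega
  have m1 : (|x|, y') ∈ S := by
    have := simp_mem hS h h'; rwa [SImp_self, e1] at this
  have m2 : (|x|, -y') ∈ S := by
    have := simp_mem hS h' h; rwa [SImp_self, e2] at this
  have hk : y'.natAbs ∈ MSet S := by
    rcases le_or_gt 0 y' with hy | hy
    · have e : ((y'.natAbs : ℤ)) = y' := by omega
      exact ⟨|x|, by rw [e]; exact m1, by rw [e]; exact m2⟩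
    · have e : ((y'.natAbs : ℤ)) = -y' := by omega
      exact ⟨|x|, by rw [e]; exact m2, by rw [e]; simpa using m1⟩
  have := mem_MSet_le hS hk
  simp only [Int.abs_eq_natAbs] at *
  omega

/-- L3 : a fiber containing an element of magnitude > m is a singleton. -/
lemma big_unique (hS : Subalg2 (Zeven n) S) {x y y' : ℤ} (h : (x, y) ∈ S)
    (hbig : (mOf S : ℤ) < |y|) (h' : (x, y') ∈ S) : y' = y := by
  by_contra hne
  rcases le_or_gt |y| |y'| with hle | hlt
  · have := sym_le hS h h' (fun e => hne e.symm) hle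
    simp only [Int.abs_eq_natAbs] at *; omega
  · have := sym_le hS h' h hne (le_of_lt hlt)
    simp only [Int.abs_eq_natAbs] at *; omega

/-- L4 : big values at positive positions are positive. -/
lemma big_pos (hS : Subalg2 (Zeven n) S) {x y : ℤ} (h : (x, y) ∈ S)
    (hbig : (mOf S : ℤ) < |y|) (hx : 0 < x) : 0 < y := by
  have habs : (|x|, |y|) ∈ S := by
    have := simp_mem hS h h; rwa [SImp_self, SImp_self] at this
  rw [abs_of_pos hx] at habs
  have := big_unique hS h hbig habs
  have := (memZ hS h).2.2.1
  simp only [Int.abs_eq_natAbs] at *; omega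

lemma big_neg (hS : Subalg2 (Zeven n) S) {x y : ℤ} (h : (x, y) ∈ S)
    (hbig : (mOf S : ℤ) < |y|) (hx : x < 0) : y < 0 := by
  have := big_pos hS (neg_mem hS h) (by rwa [abs_neg]) (by omega)
  omega

end Core

section Core2

variable {n : ℕ} {S : Set (ℤ × ℤ)}

/-- L5 : positions with a big value lie strictly above positions with only small values. -/
lemma big_above (hS : Subalg2 (Zeven n) S) {x y x' y' : ℤ} (h : (x, y) ∈ S)
    (hy : |y| ≤ (mOf S : ℤ)) (h' : (x', y') ∈ S) (hy' : (mOf S : ℤ) < |y'|) :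
    |x| < |x'| := by
  by_contra hcon
  push_neg at hcon
  have hne : y ≠ y' := by simp only [Int.abs_eq_natAbs] at hy hy'; omega
  rcases lt_trichotomy |x'| |x| with hlt | heq | hgt
  · -- SImp (x',y') (x,y) = (x, -y')
    have e1 : SImp x' x = x := SImp_big x' x hlt
    have e2 : SImp y' y = -y' := SImp_small y' y (by simp only [Int.abs_eq_natAbs] at *; omega)
    have m1 : (x, -y') ∈ S := by
      have := simp_mem hS h' h; rwa [e1, e2] at this
    have hne2 : y ≠ -y' := by simp only [Int.abs_eq_natAbs] at hy hy'; omega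
    have hle2 : |y| ≤ |(-y')| := by simp only [Int.abs_eq_natAbs] at *; omega
    have := sym_le hS h m1 hne2 hle2
    simp only [Int.abs_eq_natAbs] at *; omega
  · have hor : x' = x ∨ x' = -x := by simp only [Int.abs_eq_natAbs] at heq; omega
    rcases hor with he | he
    · rw [he] at h'
      have hle2 : |y| ≤ |y'| := by simp only [Int.abs_eq_natAbs] at *; omega
      have := sym_le hS h h' hne hle2
      omega
    · have m1 : (x, -y') ∈ S := by
        have := neg_mem hS h'; rw [he] at this; simpa using this
      have hne2 : y ≠ -y' := by simp only [Int.abs_eq_natAbs] at hy hy'; omega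
      have hle2 : |y| ≤ |(-y')| := by simp only [Int.abs_eq_natAbs] at *; omega
      have := sym_le hS h m1 hne2 hle2
      simp only [Int.abs_eq_natAbs] at *; omega
  · omega

/-- L6 on positive positions. -/
lemma big_mono_pos (hS : Subalg2 (Zeven n) S) {x₁ y₁ x₂ y₂ : ℤ} (h1 : (x₁, y₁) ∈ S)
    (hb1 : (mOf S : ℤ) < |y₁|) (h2 : (x₂, y₂) ∈ S) (hb2 : (mOf S : ℤ) < |y₂|)
    (hx2 : 0 < x₂) (hlt : x₂ < x₁) : y₂ < y₁ := by
  have hp1 : 0 < y₁ := big_pos hS h1 hb1 (by omega)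
  have hp2 : 0 < y₂ := big_pos hS h2 hb2 hx2
  rcases lt_trichotomy y₂ y₁ with h | h | h
  · exact h
  · -- equal values
    subst h
    have e1 : SImp x₁ x₂ = -x₁ := SImp_small x₁ x₂ (by simp only [Int.abs_eq_natAbs]; omega)
    have e2 : SImp y₂ y₂ = y₂ := by rw [SImp_self]; exact abs_of_pos hp2
    have m1 : (-x₁, y₂) ∈ S := by
      have := simp_mem hS h1 h2; rwa [e1, e2] at this
    have m2 : (-x₁, -y₂) ∈ S := neg_mem hS h1
    have := sym_le hS m1 m2 (by omega) (by simp only [Int.abs_eq_natAbs]; omega)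
    simp only [Int.abs_eq_natAbs] at *; omega
  · -- y₁ < y₂ : SImp (x₂,y₂) (x₁,y₁) = (x₁, -y₂) lands in fiber of x₁
    have e1 : SImp x₂ x₁ = x₁ := SImp_big x₂ x₁ (by simp only [Int.abs_eq_natAbs]; omega)
    have e2 : SImp y₂ y₁ = -y₂ := SImp_small y₂ y₁ (by simp only [Int.abs_eq_natAbs]; omega)
    have m1 : (x₁, -y₂) ∈ S := by
      have := simp_mem hS h2 h1; rwa [e1, e2] at this
    have := big_unique hS h1 hb1 m1
    omega

/-- L6 : the map on big positions is strictly monotone. -/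
lemma big_mono (hS : Subalg2 (Zeven n) S) {x₁ y₁ x₂ y₂ : ℤ} (h1 : (x₁, y₁) ∈ S)
    (hb1 : (mOf S : ℤ) < |y₁|) (h2 : (x₂, y₂) ∈ S) (hb2 : (mOf S : ℤ) < |y₂|)
    (hlt : x₂ < x₁) : y₂ < y₁ := by
  have hz1 : x₁ ≠ 0 := (memZ hS h1).1
  have hz2 : x₂ ≠ 0 := (memZ hS h2).1
  rcases lt_or_gt_of_ne hz2 with hneg | hpos
  · rcases lt_or_gt_of_ne hz1 with hneg1 | hpos1
    · -- both negative : use negations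
      have := big_mono_pos hS (neg_mem hS h2) (by rwa [abs_neg]) (neg_mem hS h1)
        (by rwa [abs_neg]) (by omega) (by omega)
      omega
    · have := big_pos hS h1 hb1 hpos1
      have := big_neg hS h2 hb2 hneg
      omega
  · exact big_mono_pos hS h1 hb1 h2 hb2 hpos hlt

lemma mem_ASet_abs (hS : Subalg2 (Zeven n) S) {x y : ℤ} (h : (x, y) ∈ S)
    (hsmall : ∀ y', (x, y') ∈ S → |y'| ≤ (mOf S : ℤ)) : x.natAbs ∈ ASet S := by
  rcases le_or_gt 0 x with hx | hx
  · have e : ((x.natAbs : ℤ)) = x := by omega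
    exact ⟨y, by rw [e]; exact h, by rw [e]; exact hsmall⟩
  · have e : ((x.natAbs : ℤ)) = -x := by omega
    refine ⟨-y, by rw [e]; exact neg_mem hS h, ?_⟩
    intro y' hy'
    rw [e] at hy'
    have := hsmall (-y') (by simpa using neg_mem hS hy')
    simp only [Int.abs_eq_natAbs] at *; omega

/-- every small-fibered position has magnitude ≤ a*. -/
lemma small_le_a (hS : Subalg2 (Zeven n) S) {x y : ℤ} (h : (x, y) ∈ S)
    (hsmall : ∀ y', (x, y') ∈ S → |y'| ≤ (mOf S : ℤ)) : |x| ≤ (aOf S : ℤ) := by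
  have := mem_ASet_le hS (mem_ASet_abs hS h hsmall)
  simp only [Int.abs_eq_natAbs]; omega

/-- big positions have magnitude > a*. -/
lemma big_above_a (hS : Subalg2 (Zeven n) S) {x y : ℤ} (h : (x, y) ∈ S)
    (hy : (mOf S : ℤ) < |y|) : (aOf S : ℤ) < |x| := by
  rcases Set.eq_empty_or_nonempty (ASet S) with he | hne
  · have ha0 : aOf S = 0 := by rw [aOf, he, csSup_empty]; rfl
    have := (memZ hS h).1
    rw [ha0]
    simp only [Int.abs_eq_natAbs] at *; omega
  · have hmem : aOf S ∈ ASet S := Nat.sSup_mem hne (ASet_bdd hS)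
    obtain ⟨y₀, h₀, hs₀⟩ := hmem
    have := big_above hS h₀ (hs₀ y₀ h₀) h hy
    simp only [Int.abs_eq_natAbs] at *; omega

lemma m_le_n (hS : Subalg2 (Zeven n) S) : mOf S ≤ n := by
  rcases Set.eq_empty_or_nonempty (MSet S) with he | hne
  · rw [mOf, he, csSup_empty]; exact Nat.zero_le n
  · have hmem : mOf S ∈ MSet S := Nat.sSup_mem hne (MSet_bdd hS)
    obtain ⟨x, h1, _⟩ := hmem
    have := (memZ hS h1).2.2.2
    simp only [Int.abs_eq_natAbs] at this; omega

lemma a_le_n (hS : Subalg2 (Zeven n) S) : aOf S ≤ n := by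
  rcases Set.eq_empty_or_nonempty (ASet S) with he | hne
  · rw [aOf, he, csSup_empty]; exact Nat.zero_le n
  · have hmem : aOf S ∈ ASet S := Nat.sSup_mem hne (ASet_bdd hS)
    obtain ⟨y, h1, _⟩ := hmem
    have := (memZ hS h1).2.1
    simp only [Int.abs_eq_natAbs] at this; omega

end Core2

def TOf (S : Set (ℤ × ℤ)) : Set (ℤ × ℤ) :=
  {p | (p ∈ S ∧ (mOf S : ℤ) < |p.2|) ∨
    (p.1 ≠ 0 ∧ |p.1| ≤ (aOf S : ℤ) ∧ p.2 ≠ 0 ∧ |p.2| ≤ (mOf S : ℤ))}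

section Core3

variable {n : ℕ} {S : Set (ℤ × ℤ)} {U U' : Set ℤ}

lemma S_sub_T (hS : Subalg2 (Zeven n) S) : S ⊆ TOf S := by
  intro p hp
  have hp' : (p.1, p.2) ∈ S := hp
  rcases lt_or_ge (mOf S : ℤ) |p.2| with hb | hs
  · exact Or.inl ⟨hp, hb⟩
  · refine Or.inr ⟨(memZ hS hp).1, ?_, (memZ hS hp).2.2.1, hs⟩
    refine small_le_a hS hp' ?_
    intro y' hy'
    by_contra hbig
    push_neg at hbig
    have := big_unique hS hy' hbig hp'
    simp only [Int.abs_eq_natAbs] at *; omega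

/-- The key use of the order-theoretic hypotheses: if the block is nonempty and meets `U`
in the first coordinate then `-m ∈ U'`. -/
lemma key_block (hS : Subalg2 (Zeven n) S) (hU : Upset U)
    (hsub : ∀ p ∈ S, p.1 ∈ U → p.2 ∈ U')
    (hm : 1 ≤ mOf S) (hA : (ASet S).Nonempty) {x : ℤ} (hxU : x ∈ U)
    (hxa : x ≤ (aOf S : ℤ)) : -(mOf S : ℤ) ∈ U' := by
  by_contra hm'
  have hMne : (MSet S).Nonempty := by
    rcases Set.eq_empty_or_nonempty (MSet S) with he | h
    · exfalso; have : mOf S = 0 := by rw [mOf, he, csSup_empty]; rfl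
      omega
    · exact h
  have hMm : mOf S ∈ MSet S := Nat.sSup_mem hMne (MSet_bdd hS)
  obtain ⟨x₀, hx₀1, hx₀2⟩ := hMm
  have hAa : aOf S ∈ ASet S := Nat.sSup_mem hA (ASet_bdd hS)
  obtain ⟨y₀, hy₀, hsy₀⟩ := hAa
  have haU : ((aOf S : ℤ)) ∈ U := hU x _ hxU hxa
  have hx₀n : x₀ ∉ U := fun h => hm' (hsub _ hx₀2 h)
  have hx₀n' : -x₀ ∉ U := fun h => hm' (hsub _ (neg_mem hS hx₀1) h)
  have h1 : x₀ < (aOf S : ℤ) := by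
    by_contra h; push_neg at h; exact hx₀n (hU _ _ haU h)
  have h2 : -x₀ < (aOf S : ℤ) := by
    by_contra h; push_neg at h; exact hx₀n' (hU _ _ haU h)
  have hx₀z : x₀ ≠ 0 := (memZ hS hx₀1).1
  have ha1 : 1 ≤ aOf S := by omega
  have hy₀le : |y₀| ≤ (mOf S : ℤ) := hsy₀ y₀ hy₀
  have hy₀z : y₀ ≠ 0 := (memZ hS hy₀).2.2.1
  rcases eq_or_ne y₀ (-(mOf S : ℤ)) with he | hne1
  · exact hm' (by rw [← he]; exact hsub _ hy₀ haU)
  rcases eq_or_ne y₀ ((mOf S : ℤ)) with he | hne2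
  · -- y₀ = m : produce ((a*), -m) via SImp and negation
    have e1 : SImp ((aOf S : ℤ)) x₀ = -((aOf S : ℤ)) :=
      SImp_small _ _ (by simp only [Int.abs_eq_natAbs]; omega)
    have e2 : SImp ((mOf S : ℤ)) ((mOf S : ℤ)) = (mOf S : ℤ) := by
      rw [SImp_self]; simp only [Int.abs_eq_natAbs]; omega
    have mem : (-((aOf S : ℤ)), (mOf S : ℤ)) ∈ S := by
      have := simp_mem hS (by rw [he] at hy₀; exact hy₀) hx₀1
      rwa [e1, e2] at this
    have mem2 : (((aOf S : ℤ)), -(mOf S : ℤ)) ∈ S := by simpa using neg_mem hS mem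
    exact hm' (hsub _ mem2 haU)
  · -- |y₀| < m
    have e1 : SImp x₀ ((aOf S : ℤ)) = ((aOf S : ℤ)) :=
      SImp_big _ _ (by simp only [Int.abs_eq_natAbs]; omega)
    have e2 : SImp ((mOf S : ℤ)) y₀ = -(mOf S : ℤ) :=
      SImp_small _ _ (by simp only [Int.abs_eq_natAbs] at *; omega)
    have mem : (((aOf S : ℤ)), -(mOf S : ℤ)) ∈ S := by
      have := simp_mem hS hx₀1 hy₀
      rwa [e1, e2] at this
    exact hm' (hsub _ mem haU)

lemma T_sub_R (hS : Subalg2 (Zeven n) S) (hU : Upset U) (hU' : Upset U')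
    (hsub : ∀ p ∈ S, p.1 ∈ U → p.2 ∈ U') :
    ∀ p ∈ TOf S, p.1 ∈ U → p.2 ∈ U' := by
  rintro p (⟨hpS, _⟩ | ⟨h1, h2, h3, h4⟩) hpU
  · exact hsub p hpS hpU
  · have hm1 : 1 ≤ mOf S := by simp only [Int.abs_eq_natAbs] at h4; omega
    have hA : (ASet S).Nonempty := by
      rcases Set.eq_empty_or_nonempty (ASet S) with he | h
      · exfalso
        have : aOf S = 0 := by rw [aOf, he, csSup_empty]; rfl
        rw [this] at h2
        simp only [Int.abs_eq_natAbs] at h2; omega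
      · exact h
    have key := key_block hS hU hsub hm1 hA hpU
      (le_trans (le_abs_self _) h2)
    exact hU' _ _ key (by simp only [Int.abs_eq_natAbs] at h4 ⊢; omega)

lemma T_subalg (hS : Subalg2 (Zeven n) S) : Subalg2 (Zeven n) (TOf S) := by
  have hblock : ∀ x y : ℤ, x ≠ 0 → |x| ≤ (aOf S : ℤ) → y ≠ 0 → |y| ≤ (mOf S : ℤ) →
      (x, y) ∈ TOf S := fun x y hx h1 hy h2 => Or.inr ⟨hx, h1, hy, h2⟩
  have han : aOf S ≤ n := a_le_n hS
  have hmn : mOf S ≤ n := m_le_n hS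
  refine ⟨hS.1.imp (fun p hp => S_sub_T hS hp), ?_, ?_⟩
  · rintro p (⟨hpS, _⟩ | ⟨h1, h2, h3, h4⟩)
    · exact hS.2.1 hpS
    · constructor <;> constructor
      · constructor <;> simp only [Int.abs_eq_natAbs] at h2 <;> omega
      · exact h1
      · constructor <;> simp only [Int.abs_eq_natAbs] at h4 <;> omega
      · exact h3
  · rintro p hp q hq
    rcases hp with ⟨hpS, hpb⟩ | ⟨hp1, hp2, hp3, hp4⟩ <;>
      rcases hq with ⟨hqS, hqb⟩ | ⟨hq1, hq2, hq3, hq4⟩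
    · -- both big
      refine ⟨Or.inl ⟨(hS.2.2 p hpS q hqS).1, ?_⟩, Or.inl ⟨(hS.2.2 p hpS q hqS).2.1, ?_⟩,
        Or.inl ⟨(hS.2.2 p hpS q hqS).2.2.1, by simpa using hpb⟩,
        Or.inl ⟨(hS.2.2 p hpS q hqS).2.2.2, ?_⟩⟩
      · rcases min_choice p.2 q.2 with h | h <;> rw [h] <;> assumption
      · rcases max_choice p.2 q.2 with h | h <;> rw [h] <;> assumption
      · rcases SImp_cases p.2 q.2 with h | h | h <;> rw [h] <;>
          simp only [Int.abs_eq_natAbs] at * <;> omega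
    · -- p big, q block
      have hp' : (p.1, p.2) ∈ S := hpS
      have hgta : (aOf S : ℤ) < |p.1| := big_above_a hS hp' hpb
      have hsgn : (0 < p.1 ∧ (mOf S : ℤ) < p.2) ∨ (p.1 < 0 ∧ p.2 < -(mOf S : ℤ)) := by
        rcases lt_or_gt_of_ne ((memZ hS hpS).1) with h | h
        · right; refine ⟨h, ?_⟩
          have := big_neg hS hp' hpb h
          simp only [Int.abs_eq_natAbs] at *; omega
        · left; refine ⟨h, ?_⟩
          have := big_pos hS hp' hpb h
          simp only [Int.abs_eq_natAbs] at *; omega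
      constructor
      · -- min
        rcases hsgn with ⟨ha, hb⟩ | ⟨ha, hb⟩
        · have e1 : min p.1 q.1 = q.1 := min_eq_right (by simp only [Int.abs_eq_natAbs] at *; omega)
          have e2 : min p.2 q.2 = q.2 := min_eq_right (by simp only [Int.abs_eq_natAbs] at *; omega)
          rw [e1, e2]; exact hblock _ _ hq1 hq2 hq3 hq4
        · have e1 : min p.1 q.1 = p.1 := min_eq_left (by simp only [Int.abs_eq_natAbs] at *; omega)
          have e2 : min p.2 q.2 = p.2 := min_eq_left (by simp only [Int.abs_eq_natAbs] at *; omega)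
          rw [e1, e2]; exact Or.inl ⟨hpS, hpb⟩
      constructor
      · -- max
        rcases hsgn with ⟨ha, hb⟩ | ⟨ha, hb⟩
        · have e1 : max p.1 q.1 = p.1 := max_eq_left (by simp only [Int.abs_eq_natAbs] at *; omega)
          have e2 : max p.2 q.2 = p.2 := max_eq_left (by simp only [Int.abs_eq_natAbs] at *; omega)
          rw [e1, e2]; exact Or.inl ⟨hpS, hpb⟩
        · have e1 : max p.1 q.1 = q.1 := max_eq_right (by simp only [Int.abs_eq_natAbs] at *; omega)
          have e2 : max p.2 q.2 = q.2 := max_eq_right (by simp only [Int.abs_eq_natAbs] at *; omega)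
          rw [e1, e2]; exact hblock _ _ hq1 hq2 hq3 hq4
      constructor
      · exact Or.inl ⟨neg_mem hS hpS, by simpa using hpb⟩
      · -- SImp : (-p.1, -p.2)
        have e1 : SImp p.1 q.1 = -p.1 := SImp_small _ _ (by simp only [Int.abs_eq_natAbs] at *; omega)
        have e2 : SImp p.2 q.2 = -p.2 := SImp_small _ _ (by simp only [Int.abs_eq_natAbs] at *; omega)
        rw [e1, e2]
        exact Or.inl ⟨neg_mem hS hpS, by simpa using hpb⟩
    · -- p block, q big
      have hq' : (q.1, q.2) ∈ S := hqS
      have hgta : (aOf S : ℤ) < |q.1| := big_above_a hS hq' hqb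
      have hsgn : (0 < q.1 ∧ (mOf S : ℤ) < q.2) ∨ (q.1 < 0 ∧ q.2 < -(mOf S : ℤ)) := by
        rcases lt_or_gt_of_ne ((memZ hS hqS).1) with h | h
        · right; refine ⟨h, ?_⟩
          have := big_neg hS hq' hqb h
          simp only [Int.abs_eq_natAbs] at *; omega
        · left; refine ⟨h, ?_⟩
          have := big_pos hS hq' hqb h
          simp only [Int.abs_eq_natAbs] at *; omega
      constructor
      · rcases hsgn with ⟨ha, hb⟩ | ⟨ha, hb⟩
        · have e1 : min p.1 q.1 = p.1 := min_eq_left (by simp only [Int.abs_eq_natAbs] at *; omega)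
          have e2 : min p.2 q.2 = p.2 := min_eq_left (by simp only [Int.abs_eq_natAbs] at *; omega)
          rw [e1, e2]; exact hblock _ _ hp1 hp2 hp3 hp4
        · have e1 : min p.1 q.1 = q.1 := min_eq_right (by simp only [Int.abs_eq_natAbs] at *; omega)
          have e2 : min p.2 q.2 = q.2 := min_eq_right (by simp only [Int.abs_eq_natAbs] at *; omega)
          rw [e1, e2]; exact Or.inl ⟨hqS, hqb⟩
      constructor
      · rcases hsgn with ⟨ha, hb⟩ | ⟨ha, hb⟩
        · have e1 : max p.1 q.1 = q.1 := max_eq_right (by simp only [Int.abs_eq_natAbs] at *; omega)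
          have e2 : max p.2 q.2 = q.2 := max_eq_right (by simp only [Int.abs_eq_natAbs] at *; omega)
          rw [e1, e2]; exact Or.inl ⟨hqS, hqb⟩
        · have e1 : max p.1 q.1 = p.1 := max_eq_left (by simp only [Int.abs_eq_natAbs] at *; omega)
          have e2 : max p.2 q.2 = p.2 := max_eq_left (by simp only [Int.abs_eq_natAbs] at *; omega)
          rw [e1, e2]; exact hblock _ _ hp1 hp2 hp3 hp4
      constructor
      · exact hblock _ _ (by omega) (by simpa using hp2) (by omega) (by simpa using hp4)
      · -- SImp : q
        have e1 : SImp p.1 q.1 = q.1 := SImp_big _ _ (by simp only [Int.abs_eq_natAbs] at *; omega)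
        have e2 : SImp p.2 q.2 = q.2 := SImp_big _ _ (by simp only [Int.abs_eq_natAbs] at *; omega)
        rw [e1, e2]; exact Or.inl ⟨hqS, hqb⟩
    · -- both block
      refine ⟨?_, ?_, ?_, ?_⟩
      · rcases min_choice p.1 q.1 with h1 | h1 <;> rcases min_choice p.2 q.2 with h2 | h2 <;>
          rw [h1, h2] <;> exact hblock _ _ (by assumption) (by assumption) (by assumption) (by assumption)
      · rcases max_choice p.1 q.1 with h1 | h1 <;> rcases max_choice p.2 q.2 with h2 | h2 <;>
          rw [h1, h2] <;> exact hblock _ _ (by assumption) (by assumption) (by assumption) (by assumption)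
      · exact hblock _ _ (by omega) (by simpa using hp2) (by omega) (by simpa using hp4)
      · refine hblock _ _ ?_ ?_ ?_ ?_
        · rcases SImp_cases p.1 q.1 with h | h | h <;> rw [h] <;>
            simp only [Int.abs_eq_natAbs] at * <;> omega
        · rcases SImp_cases p.1 q.1 with h | h | h <;> rw [h] <;>
            simp only [Int.abs_eq_natAbs] at * <;> omega
        · rcases SImp_cases p.2 q.2 with h | h | h <;> rw [h] <;>
            simp only [Int.abs_eq_natAbs] at * <;> omega
        · rcases SImp_cases p.2 q.2 with h | h | h <;> rw [h] <;>
            simp only [Int.abs_eq_natAbs] at * <;> omega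

/-- With maximality : `S` equals its canonical completion. -/
lemma T_eq (hS : Subalg2 (Zeven n) S) (hU : Upset U) (hU' : Upset U')
    (hsub : ∀ p ∈ S, p.1 ∈ U → p.2 ∈ U')
    (hmax : ∀ S' : Set (ℤ × ℤ), Subalg2 (Zeven n) S' → (∀ p ∈ S', p.1 ∈ U → p.2 ∈ U') →
      S ⊆ S' → S' = S) : TOf S = S :=
  hmax (TOf S) (T_subalg hS) (T_sub_R hS hU hU' hsub) (S_sub_T hS)

end Core3

section PE

lemma mk_partialEnd {n : ℕ} {D : Set ℤ} {h : ℤ → ℤ}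
    (hne : D.Nonempty) (hDZ : D ⊆ Zeven n) (hsym : ∀ x ∈ D, -x ∈ D)
    (him : ∀ x ∈ D, h x ∈ Zeven n) (hmono : ∀ x ∈ D, ∀ y ∈ D, x < y → h x < h y)
    (hodd : ∀ x ∈ D, h (-x) = -h x) : PartialEnd (Zeven n) D h := by
  have hmono' : ∀ x ∈ D, ∀ y ∈ D, x ≤ y → h x ≤ h y := by
    intro x hx y hy hxy
    rcases eq_or_lt_of_le hxy with rfl | hlt
    · exact le_refl _
    · exact le_of_lt (hmono x hx y hy hlt)
  have habs : ∀ x ∈ D, |x| ∈ D := by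
    intro x hx
    rcases abs_choice x with hc | hc <;> rw [hc]
    · exact hx
    · exact hsym x hx
  have hminD : ∀ x ∈ D, ∀ y ∈ D, min x y ∈ D := by
    intro x hx y hy; rcases min_choice x y with hc | hc <;> rw [hc] <;> assumption
  have hmaxD : ∀ x ∈ D, ∀ y ∈ D, max x y ∈ D := by
    intro x hx y hy; rcases max_choice x y with hc | hc <;> rw [hc] <;> assumption
  have hsimpD : ∀ x ∈ D, ∀ y ∈ D, SImp x y ∈ D := by
    intro x hx y hy
    rcases SImp_cases x y with hc | hc | hc <;> rw [hc]
    · exact hsym x hx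
    · exact hy
    · exact habs x hx
  have hminh : ∀ x ∈ D, ∀ y ∈ D, h (min x y) = min (h x) (h y) := by
    intro x hx y hy
    rcases le_total x y with hc | hc
    · rw [min_eq_left hc, min_eq_left (hmono' x hx y hy hc)]
    · rw [min_eq_right hc, min_eq_right (hmono' y hy x hx hc)]
  have hmaxh : ∀ x ∈ D, ∀ y ∈ D, h (max x y) = max (h x) (h y) := by
    intro x hx y hy
    rcases le_total x y with hc | hc
    · rw [max_eq_right hc, max_eq_right (hmono' x hx y hy hc)]
    · rw [max_eq_left hc, max_eq_left (hmono' y hy x hx hc)]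
  refine ⟨⟨hne, hDZ, fun a ha b hb => ⟨hminD a ha b hb, hmaxD a ha b hb, hsym a ha,
    hsimpD a ha b hb⟩⟩, ⟨hne.image h, ?_, ?_⟩, ?_, ?_⟩
  · rintro u ⟨a, ha, rfl⟩; exact him a ha
  · rintro u ⟨a, ha, rfl⟩ v ⟨b, hb, rfl⟩
    refine ⟨?_, ?_, ?_, ?_⟩
    · rcases min_choice (h a) (h b) with hc | hc <;> rw [hc] <;> exact ⟨_, by assumption, rfl⟩
    · rcases max_choice (h a) (h b) with hc | hc <;> rw [hc] <;> exact ⟨_, by assumption, rfl⟩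
    · exact ⟨-a, hsym a ha, hodd a ha⟩
    · rcases SImp_cases (h a) (h b) with hc | hc | hc <;> rw [hc]
      · exact ⟨-a, hsym a ha, hodd a ha⟩
      · exact ⟨b, hb, rfl⟩
      · rcases abs_choice (h a) with hd | hd <;> rw [hd]
        · exact ⟨a, ha, rfl⟩
        · exact ⟨-a, hsym a ha, hodd a ha⟩
  · intro a ha; exact ⟨a, ha, rfl⟩
  · intro a ha b hb
    refine ⟨hminh a ha b hb, hmaxh a ha b hb, hodd a ha, ?_⟩
    rcases le_or_gt a b with hc | hc
    · have e1 : SImp a b = max (-a) b := by rw [SImp]; exact if_pos hc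
      have e2 : SImp (h a) (h b) = max (-h a) (h b) := by
        rw [SImp]; exact if_pos (hmono' a ha b hb hc)
      rw [e1, e2, hmaxh (-a) (hsym a ha) b hb, hodd a ha]
    · have e1 : SImp a b = min (-a) b := by rw [SImp]; exact if_neg (not_le.mpr hc)
      have e2 : SImp (h a) (h b) = min (-h a) (h b) := by
        rw [SImp]; exact if_neg (not_le.mpr (hmono b hb a ha hc))
      rw [e1, e2, hminh (-a) (hsym a ha) b hb, hodd a ha]

end PE

def Gpos (S : Set (ℤ × ℤ)) : Set ℤ := {x | ∃ y, (x, y) ∈ S ∧ (mOf S : ℤ) < |y|}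

def DOf (S : Set (ℤ × ℤ)) : Set ℤ := {x | (x ≠ 0 ∧ |x| ≤ (aOf S : ℤ)) ∨ x ∈ Gpos S}

open scoped Classical in
noncomputable def hOf (S : Set (ℤ × ℤ)) : ℤ → ℤ := fun x =>
  if hx : ∃ y, (x, y) ∈ S ∧ (mOf S : ℤ) < |y| then hx.choose else x

section Form

variable {n : ℕ} {S : Set (ℤ × ℤ)} {U U' : Set ℤ}

lemma hOf_big {x : ℤ} (hx : x ∈ Gpos S) :
    (x, hOf S x) ∈ S ∧ (mOf S : ℤ) < |hOf S x| := by
  have hx' : ∃ y, (x, y) ∈ S ∧ (mOf S : ℤ) < |y| := hx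
  simp only [hOf]; rw [dif_pos hx']; exact hx'.choose_spec

lemma hOf_id {x : ℤ} (hx : x ∉ Gpos S) : hOf S x = x := by
  have hx' : ¬ ∃ y, (x, y) ∈ S ∧ (mOf S : ℤ) < |y| := hx
  simp only [hOf]; rw [dif_neg hx']

lemma Gpos_above (hS : Subalg2 (Zeven n) S) {x : ℤ} (hx : x ∈ Gpos S) :
    (aOf S : ℤ) < |x| := by
  obtain ⟨y, h1, h2⟩ := hx
  exact big_above_a hS h1 h2

lemma Gpos_neg (hS : Subalg2 (Zeven n) S) {x : ℤ} (hx : x ∈ Gpos S) : -x ∈ Gpos S := by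
  obtain ⟨y, h1, h2⟩ := hx
  exact ⟨-y, neg_mem hS h1, by simpa using h2⟩

lemma mem_D_of_S (hS : Subalg2 (Zeven n) S) {p : ℤ × ℤ} (hp : p ∈ S) : p.1 ∈ DOf S := by
  rcases S_sub_T hS hp with ⟨h1, h2⟩ | ⟨h1, h2, h3, h4⟩
  · exact Or.inr ⟨p.2, h1, h2⟩
  · exact Or.inl ⟨h1, h2⟩

/-- Main structure lemma, "direct orientation" case. -/
theorem form_I (hS : Subalg2 (Zeven n) S) (hU : Upset U) (hU' : Upset U')
    (hsub : ∀ p ∈ S, p.1 ∈ U → p.2 ∈ U')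
    (hmax : ∀ S' : Set (ℤ × ℤ), Subalg2 (Zeven n) S' → (∀ p ∈ S', p.1 ∈ U → p.2 ∈ U') →
      S ⊆ S' → S' = S)
    (hcase : aOf S ≤ mOf S) :
    ∃ D : Set ℤ, ∃ h : ℤ → ℤ, mOf S ≤ n ∧ PartialEnd (Zeven n) D h ∧
      S = {p : ℤ × ℤ | p.1 ∈ Zeven n ∧ p.2 ∈ Zeven n ∧ p.1 ∈ D ∧ eqm (mOf S) (h p.1) p.2} := by
  have hTe := T_eq hS hU hU' hsub hmax
  have han : aOf S ≤ n := a_le_n hS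
  have hmn : mOf S ≤ n := m_le_n hS
  refine ⟨DOf S, hOf S, hmn, ?_, ?_⟩
  · -- PartialEnd
    refine mk_partialEnd ?_ ?_ ?_ ?_ ?_ ?_
    · obtain ⟨p, hp⟩ := hS.1
      exact ⟨p.1, mem_D_of_S hS hp⟩
    · rintro x (⟨h1, h2⟩ | hx)
      · exact ⟨⟨by simp only [Int.abs_eq_natAbs] at h2; omega,
          by simp only [Int.abs_eq_natAbs] at h2; omega⟩, h1⟩
      · obtain ⟨y, h1, _⟩ := hx
        have := memZ hS h1
        exact ⟨⟨by simp only [Int.abs_eq_natAbs] at this; omega,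
          by simp only [Int.abs_eq_natAbs] at this; omega⟩, this.1⟩
    · rintro x (⟨h1, h2⟩ | hx)
      · exact Or.inl ⟨by omega, by simpa using h2⟩
      · exact Or.inr (Gpos_neg hS hx)
    · rintro x hx
      by_cases hg : x ∈ Gpos S
      · have := hOf_big hg
        have h2 := memZ hS this.1
        exact ⟨⟨by simp only [Int.abs_eq_natAbs] at h2; omega,
          by simp only [Int.abs_eq_natAbs] at h2; omega⟩, h2.2.2.1⟩
      · rw [hOf_id hg]
        rcases hx with ⟨h1, h2⟩ | hx
        · exact ⟨⟨by simp only [Int.abs_eq_natAbs] at h2; omega,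
            by simp only [Int.abs_eq_natAbs] at h2; omega⟩, h1⟩
        · exact absurd hx hg
    · -- strict monotonicity
      intro x hx y hy hlt
      by_cases hgx : x ∈ Gpos S <;> by_cases hgy : y ∈ Gpos S
      · exact big_mono hS (hOf_big hgy).1 (hOf_big hgy).2 (hOf_big hgx).1 (hOf_big hgx).2 hlt
      · -- x big position, y block position : x must be negative
        have hax : (aOf S : ℤ) < |x| := Gpos_above hS hgx
        have hay : y ≠ 0 ∧ |y| ≤ (aOf S : ℤ) := hy.resolve_right hgy
        have hxneg : x < 0 := by
          simp only [Int.abs_eq_natAbs] at hax hay ⊢; omega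
        have hbig := hOf_big hgx
        have := big_neg hS hbig.1 hbig.2 hxneg
        rw [hOf_id hgy]
        have : hOf S x < -(mOf S : ℤ) := by
          have := hbig.2; simp only [Int.abs_eq_natAbs] at *; omega
        simp only [Int.abs_eq_natAbs] at *; omega
      · -- x block, y big : y positive
        have hay : (aOf S : ℤ) < |y| := Gpos_above hS hgy
        have hax : x ≠ 0 ∧ |x| ≤ (aOf S : ℤ) := hx.resolve_right hgx
        have hypos : 0 < y := by
          simp only [Int.abs_eq_natAbs] at hay hax ⊢; omega
        have hbig := hOf_big hgy
        have := big_pos hS hbig.1 hbig.2 hypos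
        rw [hOf_id hgx]
        have : (mOf S : ℤ) < hOf S y := by
          have := hbig.2; simp only [Int.abs_eq_natAbs] at *; omega
        simp only [Int.abs_eq_natAbs] at *; omega
      · rw [hOf_id hgx, hOf_id hgy]; exact hlt
    · -- oddness
      intro x hx
      by_cases hg : x ∈ Gpos S
      · have h1 := hOf_big hg
        have h2 := hOf_big (Gpos_neg hS hg)
        have h3 : (-x, -hOf S x) ∈ S := neg_mem hS h1.1
        exact big_unique hS h3 (by simpa using h1.2) h2.1
      · have hg' : -x ∉ Gpos S := fun hc => hg (by simpa using Gpos_neg hS hc)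
        rw [hOf_id hg, hOf_id hg']
  · -- the set equality
    ext p
    constructor
    · intro hp
      have hZ := hS.2.1 hp
      refine ⟨hZ.1, hZ.2, mem_D_of_S hS hp, ?_⟩
      rcases S_sub_T hS hp with ⟨h1, h2⟩ | ⟨h1, h2, h3, h4⟩
      · -- big
        have hg : p.1 ∈ Gpos S := ⟨p.2, h1, h2⟩
        have hb := hOf_big hg
        exact Or.inl (big_unique hS hb.1 hb.2 h1).symm
      · -- block
        have hg : p.1 ∉ Gpos S := by
          intro hc
          have := Gpos_above hS hc
          omega
        rw [hOf_id hg]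
        exact Or.inr ⟨by simp only [Int.abs_eq_natAbs] at *; omega, h4⟩
    · rintro ⟨hZ1, hZ2, hD, he⟩
      rw [← hTe]
      by_cases hg : p.1 ∈ Gpos S
      · have hb := hOf_big hg
        have hp2 : p.2 = hOf S p.1 := by
          rcases he with h | h
          · exact h.symm
          · exfalso; have := hb.2; simp only [Int.abs_eq_natAbs] at *; omega
        have : (p.1, p.2) ∈ S := by rw [hp2]; exact hb.1
        exact S_sub_T hS this
      · have hax : p.1 ≠ 0 ∧ |p.1| ≤ (aOf S : ℤ) := hD.resolve_right hg
        rw [hOf_id hg] at he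
        have h2 : |p.2| ≤ (mOf S : ℤ) := by
          rcases he with h | ⟨h1', h2'⟩
          · rw [← h]; exact le_trans hax.2 (by exact_mod_cast hcase)
          · exact h2'
        exact Or.inr ⟨hax.1, hax.2, hZ2.2, h2⟩

end Form

def Tr (S : Set (ℤ × ℤ)) : Set (ℤ × ℤ) := {p | (p.2, p.1) ∈ S}

def UD (U : Set ℤ) : Set ℤ := {a | -a ∉ U}

section Transpose

variable {n : ℕ} {S : Set (ℤ × ℤ)} {U U' : Set ℤ}

lemma UD_upset (hU : Upset U) : Upset (UD U) := by
  intro a b ha hab hb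
  exact ha (hU _ _ hb (by omega))

lemma Tr_subalg (hS : Subalg2 (Zeven n) S) : Subalg2 (Zeven n) (Tr S) := by
  obtain ⟨⟨p, hp⟩, hsub, hops⟩ := hS
  refine ⟨⟨(p.2, p.1), hp⟩, ?_, ?_⟩
  · intro q hq
    have := hsub hq
    exact ⟨this.2, this.1⟩
  · intro q hq r hr
    obtain ⟨h1, h2, h3, h4⟩ := hops _ hq _ hr
    exact ⟨h1, h2, h3, h4⟩

lemma Tr_Tr (S : Set (ℤ × ℤ)) : Tr (Tr S) = S := rfl

lemma Tr_sub (hS : Subalg2 (Zeven n) S) (hsub : ∀ p ∈ S, p.1 ∈ U → p.2 ∈ U') :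
    ∀ p ∈ Tr S, p.1 ∈ UD U' → p.2 ∈ UD U := by
  rintro ⟨b, a⟩ hp hb ha
  exact hb (hsub _ (neg_mem hS hp) ha)

lemma Tr_max (hS : Subalg2 (Zeven n) S)
    (hmax : ∀ S' : Set (ℤ × ℤ), Subalg2 (Zeven n) S' → (∀ p ∈ S', p.1 ∈ U → p.2 ∈ U') →
      S ⊆ S' → S' = S) :
    ∀ S' : Set (ℤ × ℤ), Subalg2 (Zeven n) S' → (∀ p ∈ S', p.1 ∈ UD U' → p.2 ∈ UD U) →
      Tr S ⊆ S' → S' = Tr S := by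
  intro S' hS' hsub' hss
  have h1 : Tr S' = S := by
    refine hmax (Tr S') (Tr_subalg hS') ?_ ?_
    · rintro ⟨a, b⟩ hp ha
      by_contra hb
      have hm : (-b, -a) ∈ S' := neg_mem hS' hp
      exact (hsub' _ hm (fun h => hb (by simpa using h))) (by simpa using ha)
    · intro p hp
      exact hss hp
  calc S' = Tr (Tr S') := rfl
    _ = Tr S := by rw [h1]

variable (hS : Subalg2 (Zeven n) S) (hgt : mOf S < aOf S) (hTe : TOf S = S)

include hS hgt hTe

lemma m_pos_of : 1 ≤ mOf S := by
  have hA : (ASet S).Nonempty := by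
    rcases Set.eq_empty_or_nonempty (ASet S) with he | h
    · exfalso
      have : aOf S = 0 := by rw [aOf, he, csSup_empty]; rfl
      omega
    · exact h
  have hAa : aOf S ∈ ASet S := Nat.sSup_mem hA (ASet_bdd hS)
  obtain ⟨y₀, hy₀, hsy₀⟩ := hAa
  have h1 := hsy₀ y₀ hy₀
  have h2 := (memZ hS hy₀).2.2.1
  simp only [Int.abs_eq_natAbs] at *; omega

lemma block_mem {x y : ℤ} (hx : x ≠ 0) (h1 : |x| ≤ (aOf S : ℤ)) (hy : y ≠ 0)
    (h2 : |y| ≤ (mOf S : ℤ)) : (x, y) ∈ S := by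
  rw [← hTe]; exact Or.inr ⟨hx, h1, hy, h2⟩

lemma mOf_Tr : mOf (Tr S) = aOf S := by
  have hm1 := m_pos_of hS hgt hTe
  have ha1 : 1 ≤ aOf S := by omega
  have ha0 : ((aOf S : ℤ)) ≠ 0 := by exact_mod_cast Nat.one_le_iff_ne_zero.mp ha1
  have hm0 : ((mOf S : ℤ)) ≠ 0 := by exact_mod_cast Nat.one_le_iff_ne_zero.mp hm1
  have hmem : aOf S ∈ MSet (Tr S) := by
    have e1 : ((aOf S : ℤ), (1:ℤ)) ∈ S := block_mem hS hgt hTe ha0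
      (by simp only [Int.abs_eq_natAbs]; omega) one_ne_zero
      (by simp only [Int.abs_eq_natAbs]; omega)
    have e2 : (-(aOf S : ℤ), (1:ℤ)) ∈ S := block_mem hS hgt hTe (neg_ne_zero.mpr ha0)
      (by simp only [Int.abs_eq_natAbs]; omega) one_ne_zero
      (by simp only [Int.abs_eq_natAbs]; omega)
    exact ⟨1, e1, e2⟩
  apply le_antisymm
  · apply csSup_le ⟨aOf S, hmem⟩
    rintro k ⟨x, h1, h2⟩
    have h1' : ((k : ℤ), x) ∈ S := h1
    have h2' : (-(k : ℤ), x) ∈ S := h2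
    have hk0 : (k : ℤ) ≠ 0 := (memZ hS h1').1
    rcases lt_or_ge (mOf S : ℤ) |x| with hbig | hsm
    · exfalso
      have := big_mono hS h1' hbig h2' hbig (by omega)
      omega
    · have hT' : ((k : ℤ), x) ∈ TOf S := by rw [hTe]; exact h1'
      rcases hT' with ⟨_, hb⟩ | ⟨_, hb, _, _⟩
      · simp only at hb; omega
      · simp only [Int.abs_eq_natAbs] at hb; omega
  · exact le_csSup (MSet_bdd (Tr_subalg hS)) hmem

lemma aOf_Tr : aOf (Tr S) = mOf S := by
  have hm1 := m_pos_of hS hgt hTe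
  have ha1 : 1 ≤ aOf S := by omega
  have hmTr := mOf_Tr hS hgt hTe
  have hm0 : ((mOf S : ℤ)) ≠ 0 := by exact_mod_cast Nat.one_le_iff_ne_zero.mp hm1
  have hmem : mOf S ∈ ASet (Tr S) := by
    have e1 : ((1:ℤ), (mOf S : ℤ)) ∈ S := block_mem hS hgt hTe one_ne_zero
      (by simp only [Int.abs_eq_natAbs]; omega) hm0
      (by simp only [Int.abs_eq_natAbs]; omega)
    refine ⟨1, e1, ?_⟩
    · intro y' hy'
      have hy'' : (y', (mOf S : ℤ)) ∈ TOf S := by rw [hTe]; exact hy'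
      rw [hmTr]
      rcases hy'' with ⟨_, hb⟩ | ⟨_, hb, _, _⟩
      · exfalso; simp only [Int.abs_eq_natAbs] at hb; omega
      · exact hb
  apply le_antisymm
  · apply csSup_le ⟨mOf S, hmem⟩
    rintro k ⟨y, h1, h2⟩
    have h1' : (y, (k : ℤ)) ∈ S := h1
    by_contra hk
    push_neg at hk
    have hbig : (mOf S : ℤ) < |(k : ℤ)| := by simp only [Int.abs_eq_natAbs]; omega
    have := big_above_a hS h1' hbig
    have := h2 y h1
    rw [hmTr] at this
    omega
  · exact le_csSup (ASet_bdd (Tr_subalg hS)) hmem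

end Transpose

section CoreMain

variable {n : ℕ} {S : Set (ℤ × ℤ)} {U U' : Set ℤ}

theorem core_main (hS : Subalg2 (Zeven n) S) (hU : Upset U) (hU' : Upset U')
    (hsub : ∀ p ∈ S, p.1 ∈ U → p.2 ∈ U')
    (hmax : ∀ S' : Set (ℤ × ℤ), Subalg2 (Zeven n) S' → (∀ p ∈ S', p.1 ∈ U → p.2 ∈ U') →
      S ⊆ S' → S' = S) :
    ∃ D : Set ℤ, ∃ h : ℤ → ℤ, ∃ m : ℕ, m ≤ n ∧ PartialEnd (Zeven n) D h ∧
      (S = {p : ℤ × ℤ | p.1 ∈ Zeven n ∧ p.2 ∈ Zeven n ∧ p.1 ∈ D ∧ eqm m (h p.1) p.2} ∨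
        S = {p : ℤ × ℤ | p.1 ∈ Zeven n ∧ p.2 ∈ Zeven n ∧ p.2 ∈ D ∧ eqm m (h p.2) p.1}) := by
  rcases le_or_gt (aOf S) (mOf S) with hle | hgt
  · obtain ⟨D, h, hmn, hPE, heq⟩ := form_I hS hU hU' hsub hmax hle
    exact ⟨D, h, mOf S, hmn, hPE, Or.inl heq⟩
  · have hTe := T_eq hS hU hU' hsub hmax
    have hS₂ := Tr_subalg hS
    have hsub₂ := Tr_sub hS hsub
    have hmax₂ := Tr_max hS hmax
    have hcase₂ : aOf (Tr S) ≤ mOf (Tr S) := by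
      rw [mOf_Tr hS hgt hTe, aOf_Tr hS hgt hTe]; omega
    obtain ⟨D, h, hmn, hPE, heq⟩ := form_I hS₂ (UD_upset hU') (UD_upset hU) hsub₂ hmax₂ hcase₂
    refine ⟨D, h, mOf (Tr S), hmn, hPE, Or.inr ?_⟩
    ext p
    constructor
    · intro hp
      have : (p.2, p.1) ∈ Tr S := hp
      rw [heq] at this
      exact ⟨this.2.1, this.1, this.2.2⟩
    · rintro ⟨h1, h2, h3, h4⟩
      have : (p.2, p.1) ∈ Tr S := by rw [heq]; exact ⟨h2, h1, h3, h4⟩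
      exact this

end CoreMain

def Uof (ω : ℤ → ℤ) : Set ℤ := {a | ω a = 1}

section Beta

variable {n : ℕ} {ω ω' : ℤ → ℤ}

lemma beta01 (hω : IsBeta n ω) : ∀ a, ω a = 0 ∨ ω a = 1 := by
  rcases hω with rfl | ⟨i, _, _, rfl⟩ | ⟨i, _, _, rfl⟩ <;> intro a <;>
    simp only [betaF, betaM, betaP] <;> split_ifs <;> simp

lemma le_iff_U (h : ∀ a, ω a = 0 ∨ ω a = 1) (h' : ∀ a, ω' a = 0 ∨ ω' a = 1) (a b : ℤ) :
    ω a ≤ ω' b ↔ (a ∈ Uof ω → b ∈ Uof ω') := by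
  rcases h a with e | e <;> rcases h' b with f | f <;>
    simp only [Uof, Set.mem_setOf_eq, e, f] <;> norm_num

lemma Uof_upset (hω : IsBeta n ω) : Upset (Uof ω) := by
  rcases hω with rfl | ⟨i, _, _, rfl⟩ | ⟨i, _, _, rfl⟩ <;> intro a b ha hab <;>
    simp only [Uof, Set.mem_setOf_eq, betaF, betaM, betaP] at * <;>
    split_ifs at * <;> omega

lemma Uof_posL (hω : ω = betaF ∨ IsBetaM n ω) : ∀ a : ℤ, 0 < a → a ∈ Uof ω := by
  rcases hω with rfl | ⟨i, _, _, rfl⟩ <;> intro a ha <;>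
    simp only [Uof, Set.mem_setOf_eq, betaF, betaM] <;> split_ifs <;> omega

lemma Uof_posR (hω : ω = betaF ∨ IsBetaP n ω) : ∀ a ∈ Uof ω, 0 < a := by
  rcases hω with rfl | ⟨i, _, _, rfl⟩ <;> intro a ha <;>
    simp only [Uof, Set.mem_setOf_eq, betaF, betaP] at ha <;> split_ifs at ha <;> omega

end Beta

section Moreover

variable {n : ℕ} {S : Set (ℤ × ℤ)} {U U' : Set ℤ}

lemma m_zero (hS : Subalg2 (Zeven n) S)
    (hsub : ∀ p ∈ S, p.1 ∈ U → p.2 ∈ U')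
    (hL : ∀ a : ℤ, 0 < a → a ∈ U) (hR : ∀ a ∈ U', 0 < a) : mOf S = 0 := by
  by_contra hm
  have hm1 : 1 ≤ mOf S := by omega
  have hMne : (MSet S).Nonempty := by
    rcases Set.eq_empty_or_nonempty (MSet S) with he | h
    · exfalso; have : mOf S = 0 := by rw [mOf, he, csSup_empty]; rfl
      omega
    · exact h
  have hMm : mOf S ∈ MSet S := Nat.sSup_mem hMne (MSet_bdd hS)
  obtain ⟨x₀, h1, h2⟩ := hMm
  have hx₀ : x₀ ≠ 0 := (memZ hS h1).1
  have e1 : SImp x₀ x₀ = |x₀| := SImp_self x₀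
  have e2 : SImp ((mOf S : ℤ)) (-(mOf S : ℤ)) = -(mOf S : ℤ) := by
    rw [SImp_eq]; simp only [Int.abs_eq_natAbs]; split_ifs <;> omega
  have mem : (|x₀|, -(mOf S : ℤ)) ∈ S := by
    have := simp_mem hS h1 h2; rwa [e1, e2] at this
  have hU1 : |x₀| ∈ U := hL _ (by simp only [Int.abs_eq_natAbs]; omega)
  have := hR _ (hsub _ mem hU1)
  omega

lemma form_moreover (hS : Subalg2 (Zeven n) S) (hU : Upset U) (hU' : Upset U')
    (hsub : ∀ p ∈ S, p.1 ∈ U → p.2 ∈ U')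
    (hmax : ∀ S' : Set (ℤ × ℤ), Subalg2 (Zeven n) S' → (∀ p ∈ S', p.1 ∈ U → p.2 ∈ U') →
      S ⊆ S' → S' = S)
    (hL : ∀ a : ℤ, 0 < a → a ∈ U) (hR : ∀ a ∈ U', 0 < a) :
    ∃ D : Set ℤ, ∃ h : ℤ → ℤ, PartialEnd (Zeven n) D h ∧
      S = {p : ℤ × ℤ | p.1 ∈ D ∧ p.2 = h p.1} := by
  have hm0 : mOf S = 0 := m_zero hS hsub hL hR
  have ha0 : aOf S = 0 := by
    rcases Set.eq_empty_or_nonempty (ASet S) with he | hne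
    · rw [aOf, he, csSup_empty]; rfl
    · exfalso
      obtain ⟨y, hy1, hy2⟩ := Nat.sSup_mem hne (ASet_bdd hS)
      have := hy2 y hy1
      have := (memZ hS hy1).2.2.1
      rw [hm0] at *
      simp only [Int.abs_eq_natAbs] at *; omega
  obtain ⟨D, h, _, hPE, heq⟩ := form_I hS hU hU' hsub hmax (by omega)
  refine ⟨D, h, hPE, ?_⟩
  rw [heq]
  ext p
  constructor
  · rintro ⟨hZ1, hZ2, hD, he⟩
    refine ⟨hD, ?_⟩
    rcases he with hee | ⟨he1, he2⟩
    · exact hee.symm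
    · exfalso
      rw [hm0] at he2
      have := hZ2.2
      simp only [Int.abs_eq_natAbs] at he2
      omega
  · rintro ⟨hD, he⟩
    have hDZ : p.1 ∈ Zeven n := hPE.1.2.1 hD
    have hZ2 : p.2 ∈ Zeven n := by
      rw [he]; exact hPE.2.1.2.1 ⟨p.1, hD, rfl⟩
    exact ⟨hDZ, hZ2, hD, Or.inl he.symm⟩

end Moreover


theorem stmt13 (n : ℕ) (hn : 2 ≤ n) (ω ω' : ℤ → ℤ) (hω : IsBeta n ω) (hω' : IsBeta n ω')
    (S : Set (ℤ × ℤ)) (hS : Subalg2 (Zeven n) S)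
    (hsub : ∀ p ∈ S, ω p.1 ≤ ω' p.2)
    (hmax : ∀ S' : Set (ℤ × ℤ), Subalg2 (Zeven n) S' → (∀ p ∈ S', ω p.1 ≤ ω' p.2) →
      S ⊆ S' → S' = S) :
    (∃ D : Set ℤ, ∃ h : ℤ → ℤ, ∃ m : ℕ, m ≤ n ∧ PartialEnd (Zeven n) D h ∧
      (S = {p : ℤ × ℤ | p.1 ∈ Zeven n ∧ p.2 ∈ Zeven n ∧ p.1 ∈ D ∧ eqm m (h p.1) p.2} ∨
        S = {p : ℤ × ℤ | p.1 ∈ Zeven n ∧ p.2 ∈ Zeven n ∧ p.2 ∈ D ∧ eqm m (h p.2) p.1})) ∧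
    ((ω = betaF ∨ IsBetaM n ω) → (ω' = betaF ∨ IsBetaP n ω') →
      ∃ D : Set ℤ, ∃ h : ℤ → ℤ, PartialEnd (Zeven n) D h ∧
        S = {p : ℤ × ℤ | p.1 ∈ D ∧ p.2 = h p.1}) := by
  have h01 := beta01 hω
  have h01' := beta01 hω'
  have hU := Uof_upset hω
  have hU' := Uof_upset hω'
  have hsubU : ∀ p ∈ S, p.1 ∈ Uof ω → p.2 ∈ Uof ω' := fun p hp =>
    (le_iff_U h01 h01' p.1 p.2).mp (hsub p hp)
  have hmaxU : ∀ S' : Set (ℤ × ℤ), Subalg2 (Zeven n) S' →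
      (∀ p ∈ S', p.1 ∈ Uof ω → p.2 ∈ Uof ω') → S ⊆ S' → S' = S := by
    intro S' h1 h2 h3
    exact hmax S' h1 (fun p hp => (le_iff_U h01 h01' p.1 p.2).mpr (h2 p hp)) h3
  constructor
  · exact core_main hS hU hU' hsubU hmaxU
  · intro hm1 hm2
    exact form_moreover hS hU hU' hsubU hmaxU (Uof_posL hm1) (Uof_posR hm2)
end

section
/- Let n ≥ 1. For G ⊆ Y, let the closure of G be the smallest subset C of Y containing G such that whenever 𝐮 ∈ C, e ∈ {f_0,…,f_n, g}, and every coordinate of 𝐮 lies in dom e, the coordinatewise image of 𝐮 under e lies in C. Then: (i) every 𝐮 ∈ Y whose first coordinate is positive lies in the closure of {𝐛_1,…,𝐛_n}; (ii) every 𝐮 ∈ Y whose first coordinate is 0 lies in the closure of {𝐛_{n+1}}. Consequently the closure of {𝐛_1,…,𝐛_{n+1}} is all of Y. -/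
/-- The endomorphism `g` of `Z_{2n+1}`, as a total function on `ℤ`. -/
def gOFun (a : ℤ) : ℤ := if 0 < a then a - 1 else if a < 0 then a + 1 else 0

/-- The underlying function of the partial endomorphism `f_i` of `Z_{2n+1}`. -/
def fOFun (i : ℕ) (a : ℤ) : ℤ :=
  if 2 ≤ i then
    (if a = (i : ℤ) - 1 then (i : ℤ) else if a = -((i : ℤ) - 1) then -(i : ℤ) else a)
  else a

/-- The domain of the partial endomorphism `f_i` of `Z_{2n+1}`. -/
def fODom (n i : ℕ) : Set ℤ := Zodd n \ {(i : ℤ), -(i : ℤ)}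

/-- The maps `f_0, …, f_n, g` on `Z_{2n+1}`, as pairs (domain, function). -/
def MapsOdd (n : ℕ) : Set (Set ℤ × (ℤ → ℤ)) :=
  {e | (∃ i : ℕ, i ≤ n ∧ e = (fODom n i, fOFun i)) ∨ e = (Zodd n, gOFun)}

/-- The test space `Y` for the odd case, as a set of `(n+1)`-tuples. -/
def YOdd (n : ℕ) : Set (Fin (n + 1) → ℤ) :=
  {u | (∀ i, u i ∈ Zodd n) ∧
    ∃ j : Fin (n + 1), 0 ≤ u j ∧ (∀ i, i ≤ j → u i = u j) ∧
      ∀ k l : Fin (n + 1), j ≤ k → k < l → u k < u l}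

/-- The tuples `𝐛_1, …, 𝐛_{n+1}` in `Y` (odd case); here `1 ≤ k ≤ n+1`. -/
def bOdd (n k : ℕ) : Fin (n + 1) → ℤ :=
  if k = n + 1 then fun p => ((p : ℕ) : ℤ)
  else fun p => max 1 (((p : ℕ) : ℤ) - ((n : ℤ) - (k : ℤ)))

/-- Membership in the closure of `G ⊆ Y` under the coordinatewise actions of
`f_0, …, f_n, g` (an action being defined at a tuple iff every coordinate lies in
the domain of the map). -/
inductive InClosureOdd (n : ℕ) (G : Set (Fin (n + 1) → ℤ)) : (Fin (n + 1) → ℤ) → Prop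
  | base {u : Fin (n + 1) → ℤ} : u ∈ G → InClosureOdd n G u
  | step {u : Fin (n + 1) → ℤ} (e : Set ℤ × (ℤ → ℤ)) :
      e ∈ MapsOdd n → InClosureOdd n G u → (∀ p, u p ∈ e.1) →
      InClosureOdd n G fun p => e.2 (u p)

section Aux
variable {n : ℕ}

lemma mono_of_Y {u : Fin (n+1) → ℤ} (hu : u ∈ YOdd n) {p q : Fin (n+1)} (hpq : p ≤ q) :
    u p ≤ u q := by
  obtain ⟨hZ, j, hj0, hc, hi⟩ := hu
  rcases le_or_gt q j with h | h
  · rw [hc p (hpq.trans h), hc q h]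
  · rcases le_or_gt p j with h' | h'
    · rw [hc p h']
      exact (hi j q le_rfl h).le
    · rcases eq_or_lt_of_le hpq with rfl | h''
      · exact le_rfl
      · exact (hi p q h'.le h'').le

lemma nonneg_of_Y {u : Fin (n+1) → ℤ} (hu : u ∈ YOdd n) (p : Fin (n+1)) : 0 ≤ u p := by
  obtain ⟨hZ, j, hj0, hc, hi⟩ := hu
  rcases le_or_gt p j with h | h
  · rw [hc p h]; exact hj0
  · exact hj0.trans (hi j p le_rfl h).le

lemma ubnd_of_Y {u : Fin (n+1) → ℤ} (hu : u ∈ YOdd n) (p : Fin (n+1)) : u p ≤ n := (hu.1 p).2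

lemma f_step {G : Set (Fin (n+1) → ℤ)} {u : Fin (n+1) → ℤ} (i : ℕ) (hin : i ≤ n)
    (hu : InClosureOdd n G u) (hdom : ∀ p, u p ∈ fODom n i) :
    InClosureOdd n G (fun p => fOFun i (u p)) :=
  .step (fODom n i, fOFun i) (Or.inl ⟨i, hin, rfl⟩) hu hdom

lemma g_step {G : Set (Fin (n+1) → ℤ)} {u : Fin (n+1) → ℤ}
    (hu : InClosureOdd n G u) (hdom : ∀ p, u p ∈ Zodd n) :
    InClosureOdd n G (fun p => gOFun (u p)) :=
  .step (Zodd n, gOFun) (Or.inr rfl) hu hdom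

lemma icl_mono {G G' : Set (Fin (n+1) → ℤ)} (h : G ⊆ G') {u : Fin (n+1) → ℤ}
    (hcl : InClosureOdd n G u) : InClosureOdd n G' u := by
  induction hcl with
  | base hb => exact .base (h hb)
  | step e he _ hdom ih => exact .step e he ih hdom

lemma fOFun_eq_self {i : ℕ} {a : ℤ} (h1 : a ≠ (i:ℤ) - 1) (h2 : a ≠ -((i:ℤ)-1)) :
    fOFun i a = a := by
  by_cases h : 2 ≤ i
  · rw [fOFun, if_pos h, if_neg h1, if_neg h2]
  · rw [fOFun, if_neg h]

lemma fOFun_bump {i : ℕ} (h : 2 ≤ i) : fOFun i ((i:ℤ) - 1) = i := by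
  simp [fOFun, h]

lemma gOFun_nonneg {a : ℤ} (h : 0 ≤ a) : gOFun a = max 0 (a - 1) := by
  unfold gOFun; split_ifs <;> omega

lemma mem_fODom {i : ℕ} {a : ℤ} :
    a ∈ fODom n i ↔ ((-(n:ℤ) ≤ a ∧ a ≤ n) ∧ a ≠ i ∧ a ≠ -i) := by
  simp [fODom, Zodd, Set.mem_diff]

lemma mem_Zodd {a : ℤ} : a ∈ Zodd n ↔ (-(n:ℤ) ≤ a ∧ a ≤ n) := Iff.rfl

/-- natural-number sum measure -/
def sN {n : ℕ} (u : Fin (n+1) → ℤ) : ℕ := (∑ p, u p).toNat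

lemma sN_lt {u v : Fin (n+1) → ℤ} (hnn : ∀ p, 0 ≤ v p) (hle : ∀ p, v p ≤ u p)
    (p0 : Fin (n+1)) (hstrict : v p0 < u p0) : sN v < sN u := by
  have h1 : (∑ p, v p) < ∑ p, u p :=
    Finset.sum_lt_sum (fun p _ => hle p) ⟨p0, Finset.mem_univ p0, hstrict⟩
  have h2 : (0:ℤ) ≤ ∑ p, v p := Finset.sum_nonneg (fun p _ => hnn p)
  unfold sN; omega

lemma le_sN {u : Fin (n+1) → ℤ} (hnn : ∀ p, 0 ≤ u p) (p0 : Fin (n+1)) :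
    (u p0).toNat ≤ sN u := by
  have h1 : u p0 ≤ ∑ p, u p := Finset.single_le_sum (fun p _ => hnn p) (Finset.mem_univ p0)
  unfold sN; omega

end Aux

section Steps
variable {n : ℕ}

lemma prefix_step {u : Fin (n+1) → ℤ} (hu : u ∈ YOdd n) (h2 : 2 ≤ u 0) :
    ∃ v ∈ YOdd n, 0 < v 0 ∧ sN v < sN u ∧
      ∀ G : Set (Fin (n+1) → ℤ), InClosureOdd n G v → InClosureOdd n G u := by
  have hmono : ∀ {a b : Fin (n+1)}, a ≤ b → u a ≤ u b := fun h => mono_of_Y hu h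
  have hnn := nonneg_of_Y hu
  have hub := ubnd_of_Y hu
  obtain ⟨hZ, j, hj0, hc, hi⟩ := hu
  have h0j : u 0 = u j := hc 0 (Fin.zero_le j)
  have hcases : ∀ p, u p = u 0 ∨ u 0 < u p := by
    intro p
    rcases le_or_gt p j with h | h
    · left; rw [hc p h, h0j]
    · right; rw [h0j]; exact hi j p le_rfl h
  set v : Fin (n+1) → ℤ := fun p => if u p = u 0 then u 0 - 1 else u p with hv
  have hv0 : v 0 = u 0 - 1 := by simp [hv]
  have hvnn : ∀ p, 0 ≤ v p := by
    intro p; rw [hv]; dsimp only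
    rcases hcases p with h | h
    · rw [if_pos h]; omega
    · rw [if_neg (by omega)]; exact hnn p
  have hvle : ∀ p, v p ≤ u p := by
    intro p; rw [hv]; dsimp only
    rcases hcases p with h | h
    · rw [if_pos h]; omega
    · rw [if_neg (by omega)]
  refine ⟨v, ⟨?_, j, ?_, ?_, ?_⟩, by omega, sN_lt hvnn hvle 0 (by omega), ?_⟩
  · intro p
    refine ⟨by have := hnn p; have := hvnn p; have := (hZ p).1; omega, ?_⟩
    exact (hvle p).trans (hZ p).2
  · rw [hv]; dsimp only; rw [if_pos h0j.symm]; omega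
  · intro i hij
    rw [hv]; dsimp only
    rw [hc i hij]
  · intro k l hjk hkl
    have hul : u 0 < u l := by rw [h0j]; exact hi j l le_rfl (lt_of_le_of_lt hjk hkl)
    rw [hv]; dsimp only
    rw [if_neg (show ¬ (u l = u 0) by omega)]
    rcases hcases k with h | h
    · rw [if_pos h]; omega
    · rw [if_neg (show ¬ (u k = u 0) by omega)]; exact hi k l hjk hkl
  · intro G hcl
    set i : ℕ := (u 0).toNat with hi'
    have hicast : (i : ℤ) = u 0 := Int.toNat_of_nonneg (by omega)
    have hdom : ∀ p, v p ∈ fODom n i := by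
      intro p
      rw [mem_fODom, hicast]
      have h1 := hvnn p; have h2 := hvle p; have h3 := (hZ p).2
      refine ⟨⟨by omega, by omega⟩, ?_, by omega⟩
      rw [hv]; dsimp only
      rcases hcases p with h | h
      · rw [if_pos h]; omega
      · rw [if_neg (by omega)]; omega
    have hfi : u = fun p => fOFun i (v p) := by
      funext p
      rcases hcases p with h | h
      · have : v p = (i:ℤ) - 1 := by rw [hv]; dsimp only; rw [if_pos h]; omega
        rw [this, fOFun_bump (i := i) (by omega), hicast, h]
      · have : v p = u p := by rw [hv]; dsimp only; rw [if_neg (by omega)]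
        rw [this, fOFun_eq_self (by omega) (by have := hnn p; omega)]
    rw [hfi]
    exact f_step i (by have := hub 0; omega) hcl hdom

set_option maxHeartbeats 1000000 in
lemma gap_step {u : Fin (n+1) → ℤ} (hu : u ∈ YOdd n) (m : ℕ) (hm : m < n)
    (hgap : u ⟨m, by omega⟩ + 2 ≤ u ⟨m+1, by omega⟩) :
    ∃ v ∈ YOdd n, v 0 = u 0 ∧ sN v < sN u ∧
      ∀ G : Set (Fin (n+1) → ℤ), InClosureOdd n G v → InClosureOdd n G u := by
  have hmono : ∀ {a b : Fin (n+1)}, a ≤ b → u a ≤ u b := fun h => mono_of_Y hu h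
  have hnn := nonneg_of_Y hu
  have hub := ubnd_of_Y hu
  obtain ⟨hZ, j, hj0, hc, hi⟩ := hu
  set p : Fin (n+1) := ⟨m+1, by omega⟩ with hp
  set q : Fin (n+1) := ⟨m, by omega⟩ with hq
  have hjq : j ≤ q := by
    by_contra hcon
    push_neg at hcon
    have h1 : u q = u j := hc q (le_of_lt hcon)
    have h2 : u p = u j := hc p (by rw [Fin.le_def]; rw [Fin.lt_def] at hcon; have h' : m < j.val := hcon; show m + 1 ≤ j.val; omega)
    omega
  have hjp : j < p := lt_of_le_of_lt hjq (by rw [Fin.lt_def]; simp [hp, hq])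
  have hside : ∀ r, r ≠ p → u r ≤ u p - 2 ∨ u p < u r := by
    intro r hr
    rcases hr.lt_or_gt with h | h
    · left
      have : r ≤ q := by rw [Fin.le_def]; rw [Fin.lt_def] at h; simp [hq]; simp [hp] at h; omega
      have := hmono this; omega
    · right; exact hi p r hjp.le h
  set v : Fin (n+1) → ℤ := fun r => if r = p then u p - 1 else u r with hv
  have hvq : ∀ r, r ≠ p → v r = u r := by intro r hr; rw [hv]; dsimp only; rw [if_neg hr]
  have hvp : v p = u p - 1 := by simp [hv]
  have h0p : (0 : Fin (n+1)) ≠ p := by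
    intro hcon
    have : (0:ℕ) = m+1 := congrArg Fin.val hcon
    omega
  have hupos : 2 ≤ u p := by have := hnn q; omega
  have hvnn : ∀ r, 0 ≤ v r := by
    intro r; by_cases hr : r = p
    · rw [hr, hvp]; omega
    · rw [hvq r hr]; exact hnn r
  have hvle : ∀ r, v r ≤ u r := by
    intro r; by_cases hr : r = p
    · rw [hr, hvp]; omega
    · rw [hvq r hr]
  refine ⟨v, ⟨?_, j, ?_, ?_, ?_⟩, hvq 0 h0p, sN_lt hvnn hvle p (by rw [hvp]; omega), ?_⟩
  · intro r
    exact ⟨by have := hvnn r; have := (hZ r).1; omega, (hvle r).trans (hZ r).2⟩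
  · rw [hvq j hjp.ne]; exact hj0
  · intro i hij
    rw [hvq i (lt_of_le_of_lt hij hjp).ne, hvq j hjp.ne]
    exact hc i hij
  · intro k l hjk hkl
    by_cases hkp : k = p
    · have hlp : l ≠ p := by rw [hkp] at hkl; exact hkl.ne'
      rw [hkp, hvp, hvq l hlp]
      have : u p < u l := hi p l hjp.le (hkp ▸ hkl)
      omega
    · rw [hvq k hkp]
      by_cases hlp : l = p
      · rw [hlp, hvp]
        have : u k ≤ u p - 2 ∨ u p < u k := hside k hkp
        have : u k < u l := hi k l hjk hkl
        rw [hlp] at this; omega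
      · rw [hvq l hlp]; exact hi k l hjk hkl
  · intro G hcl
    set i : ℕ := (u p).toNat with hi'
    have hicast : (i : ℤ) = u p := Int.toNat_of_nonneg (by omega)
    have hdom : ∀ r, v r ∈ fODom n i := by
      intro r
      rw [mem_fODom, hicast]
      refine ⟨⟨by have := hvnn r; have := (hZ r).1; omega, (hvle r).trans (hZ r).2⟩, ?_, by have := hvnn r; omega⟩
      by_cases hr : r = p
      · rw [hr, hvp]; omega
      · rw [hvq r hr]; rcases hside r hr with h | h <;> omega
    have hfi : u = fun r => fOFun i (v r) := by
      funext r
      by_cases hr : r = p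
      · rw [hr, (by rw [hvp]; omega : v p = (i:ℤ) - 1), fOFun_bump (i := i) (by omega), hicast]
      · rw [hvq r hr]
        have h1 : u r ≠ (i:ℤ) - 1 := by rcases hside r hr with h | h <;> omega
        have h2 : u r ≠ -((i:ℤ) - 1) := by have := hnn r; omega
        exact (fOFun_eq_self h1 h2).symm
    rw [hfi]
    exact f_step i (by have := hub p; omega) hcl hdom

end Steps

section Packed
variable {n : ℕ}

lemma packed_val {u : Fin (n+1) → ℤ} (j : Fin (n+1))
    (hi : ∀ k l : Fin (n+1), j ≤ k → k < l → u k < u l)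
    (hng : ∀ m : ℕ, (h : m < n) → u ⟨m+1, by omega⟩ ≤ u ⟨m, by omega⟩ + 1) :
    ∀ m : ℕ, (hm : m < n + 1) → j.val ≤ m → u ⟨m, hm⟩ = u j + (m : ℤ) - (j.val : ℤ) := by
  intro m
  induction m with
  | zero =>
    intro hm hj0
    have hj : j = ⟨0, hm⟩ := by apply Fin.ext; show j.val = 0; omega
    rw [← hj]
    have : j.val = 0 := by omega
    omega
  | succ m ih =>
    intro hm hjm
    rcases Nat.lt_or_ge m j.val with h | h
    · have hj : j = ⟨m+1, hm⟩ := by apply Fin.ext; simp; omega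
      rw [← hj]; push_cast; omega
    · have h1 : u ⟨m+1, hm⟩ ≤ u ⟨m, by omega⟩ + 1 := hng m (by omega)
      have h2 : u ⟨m, by omega⟩ < u ⟨m+1, hm⟩ :=
        hi ⟨m, by omega⟩ ⟨m+1, hm⟩ (by rw [Fin.le_def]; simpa using h) (by rw [Fin.lt_def]; simp)
      have h3 := ih (by omega) h
      push_cast
      push_cast at h3
      omega

lemma packed_pos {u : Fin (n+1) → ℤ} (hu : u ∈ YOdd n) (h1 : u 0 = 1)
    (hng : ∀ m : ℕ, (h : m < n) → u ⟨m+1, by omega⟩ ≤ u ⟨m, by omega⟩ + 1) :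
    ∃ k : ℕ, 1 ≤ k ∧ k ≤ n ∧ u = bOdd n k := by
  have hub := ubnd_of_Y hu
  obtain ⟨hZ, j, hj0, hc, hi⟩ := hu
  have h0j : u j = 1 := by rw [← hc 0 (Fin.zero_le j), h1]
  have hval := packed_val j hi hng
  have hlast : u ⟨n, by omega⟩ = 1 + (n : ℤ) - (j.val : ℤ) := by
    rw [hval n (by omega) (by omega), h0j]
  have hjn : j.val ≤ n := by have := j.isLt; omega
  have hj1 : 1 ≤ j.val := by
    have := hub ⟨n, by omega⟩
    rw [hlast] at this
    omega
  refine ⟨n + 1 - j.val, by omega, by omega, ?_⟩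
  have hkz : ((n + 1 - j.val : ℕ) : ℤ) = (n : ℤ) + 1 - (j.val : ℤ) := by omega
  funext p
  rw [bOdd, if_neg (by omega)]
  rcases le_or_gt p j with h | h
  · rw [hc p h, h0j, hkz]
    have hp : (p : ℕ) ≤ j.val := h
    omega
  · have hp : j.val ≤ (p : ℕ) := h.le
    have := hval p.val p.isLt hp
    rw [Fin.eta] at this
    rw [this, h0j, hkz]
    have hp' : j.val < (p : ℕ) := h
    omega

lemma packed_zero {u : Fin (n+1) → ℤ} (hu : u ∈ YOdd n) (h0 : u 0 = 0)
    (hng : ∀ m : ℕ, (h : m < n) → u ⟨m+1, by omega⟩ ≤ u ⟨m, by omega⟩ + 1) :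
    ∃ t : ℕ, t ≤ n ∧ u = fun p => max 0 ((p.val : ℤ) - (t : ℤ)) := by
  obtain ⟨hZ, j, hj0, hc, hi⟩ := hu
  have h0j : u j = 0 := by rw [← hc 0 (Fin.zero_le j), h0]
  have hval := packed_val j hi hng
  refine ⟨j.val, by omega, ?_⟩
  funext p
  rcases le_or_gt p j with h | h
  · rw [hc p h, h0j]
    have hp : (p : ℕ) ≤ j.val := h
    omega
  · have := hval p.val p.isLt h.le
    rw [Fin.eta] at this
    rw [this, h0j]
    have hp' : j.val < (p : ℕ) := h
    omega

lemma maxTuple_gen : ∀ t : ℕ, t ≤ n →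
    InClosureOdd n {bOdd n (n+1)} (fun p => max 0 ((p.val : ℤ) - (t : ℤ))) := by
  intro t
  induction t with
  | zero =>
    intro _
    have : (fun p : Fin (n+1) => max 0 ((p.val : ℤ) - (0:ℕ))) = bOdd n (n+1) := by
      funext p
      rw [bOdd, if_pos rfl]
      omega
    rw [this]
    exact .base rfl
  | succ t ih =>
    intro ht
    have hdom : ∀ p : Fin (n+1), max 0 ((p.val : ℤ) - (t : ℤ)) ∈ Zodd n := by
      intro p
      have := p.isLt
      exact ⟨by omega, by omega⟩
    have h1 := g_step (ih (by omega)) hdom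
    have h2 : (fun p : Fin (n+1) => gOFun (max 0 ((p.val : ℤ) - (t : ℤ)))) =
        (fun p : Fin (n+1) => max 0 ((p.val : ℤ) - ((t+1 : ℕ) : ℤ))) := by
      funext p
      rw [gOFun_nonneg (by omega)]
      push_cast
      omega
    rw [← h2]
    exact h1

end Packed

section Main
variable {n : ℕ}

lemma pos_gen (N : ℕ) : ∀ u ∈ YOdd n, sN u ≤ N → 0 < u 0 →
    InClosureOdd n {v | ∃ k : ℕ, 1 ≤ k ∧ k ≤ n ∧ v = bOdd n k} u := by
  induction N using Nat.strong_induction_on with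
  | _ N ih =>
    intro u hu hs h0
    by_cases hA : 2 ≤ u 0
    · obtain ⟨v, hvY, hv0, hvs, hstep⟩ := prefix_step hu hA
      exact hstep _ (ih (sN v) (by omega) v hvY le_rfl hv0)
    · by_cases hB : ∃ m : ℕ, ∃ h : m < n, u ⟨m, by omega⟩ + 2 ≤ u ⟨m+1, by omega⟩
      · obtain ⟨m, hm, hgap⟩ := hB
        obtain ⟨v, hvY, hv0, hvs, hstep⟩ := gap_step hu m hm hgap
        exact hstep _ (ih (sN v) (by omega) v hvY le_rfl (by omega))
      · push_neg at hB
        obtain ⟨k, hk1, hkn, hbk⟩ := packed_pos hu (by omega)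
          (fun m h => by have := hB m h; omega)
        exact .base ⟨k, hk1, hkn, hbk⟩

lemma zero_gen (N : ℕ) : ∀ u ∈ YOdd n, sN u ≤ N → u 0 = 0 →
    InClosureOdd n {bOdd n (n+1)} u := by
  induction N using Nat.strong_induction_on with
  | _ N ih =>
    intro u hu hs h0
    by_cases hB : ∃ m : ℕ, ∃ h : m < n, u ⟨m, by omega⟩ + 2 ≤ u ⟨m+1, by omega⟩
    · obtain ⟨m, hm, hgap⟩ := hB
      obtain ⟨v, hvY, hv0, hvs, hstep⟩ := gap_step hu m hm hgap
      exact hstep _ (ih (sN v) (by omega) v hvY le_rfl (by omega))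
    · push_neg at hB
      obtain ⟨t, htn, hmt⟩ := packed_zero hu h0 (fun m h => by have := hB m h; omega)
      rw [hmt]
      exact maxTuple_gen t htn

lemma bOdd_mem_Y {k : ℕ} (hk1 : 1 ≤ k) (hk2 : k ≤ n + 1) : bOdd n k ∈ YOdd n := by
  by_cases h : k = n + 1
  · subst h
    have hb : bOdd n (n+1) = fun p : Fin (n+1) => ((p:ℕ) : ℤ) := by rw [bOdd, if_pos rfl]
    rw [hb]
    refine ⟨fun p => ⟨by dsimp only; omega, by have := p.isLt; dsimp only; omega⟩, 0,
      by dsimp only; omega, ?_, ?_⟩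
    · intro i hi
      have : i = 0 := le_antisymm hi (Fin.zero_le i)
      rw [this]
    · intro k l hk hl
      have : (k:ℕ) < (l:ℕ) := hl
      dsimp only; omega
  · have hkn : k ≤ n := by omega
    have hb : bOdd n k = fun p : Fin (n+1) => max 1 (((p:ℕ):ℤ) - ((n:ℤ) - (k:ℤ))) := by
      rw [bOdd, if_neg h]
    rw [hb]
    refine ⟨fun p => ⟨by have := p.isLt; dsimp only; omega, by have := p.isLt; dsimp only; omega⟩,
      ⟨n+1-k, by omega⟩, by dsimp only; omega, ?_, ?_⟩
    · intro i hi
      have h1 : (i:ℕ) ≤ n+1-k := hi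
      dsimp only
      omega
    · intro k' l hk' hl
      have h1 : n+1-k ≤ (k':ℕ) := hk'
      have h2 : (k':ℕ) < (l:ℕ) := hl
      have h3 := l.isLt
      dsimp only
      omega

lemma Y_pres {u : Fin (n+1) → ℤ} (hu : u ∈ YOdd n) {e : Set ℤ × (ℤ → ℤ)}
    (he : e ∈ MapsOdd n) (hdom : ∀ p, u p ∈ e.1) :
    (fun p => e.2 (u p)) ∈ YOdd n := by
  have hmono : ∀ {a b : Fin (n+1)}, a ≤ b → u a ≤ u b := fun h => mono_of_Y hu h
  have hnn := nonneg_of_Y hu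
  have hub := ubnd_of_Y hu
  obtain ⟨hZ, j, hj0, hc, hi⟩ := hu
  rcases he with ⟨i, hin, rfl⟩ | rfl
  · -- f case
    simp only at hdom ⊢
    by_cases h2 : 2 ≤ i
    · have hne : ∀ p, u p ≠ (i:ℤ) ∧ u p ≠ -(i:ℤ) := fun p => ((mem_fODom).1 (hdom p)).2
      have hv : ∀ p, fOFun i (u p) = if u p = (i:ℤ) - 1 then (i:ℤ) else u p := by
        intro p
        by_cases hp : u p = (i:ℤ) - 1
        · rw [if_pos hp, hp, fOFun_bump h2]
        · rw [if_neg hp, fOFun_eq_self hp (by have := hnn p; omega)]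
      refine ⟨?_, j, ?_, ?_, ?_⟩
      · intro p
        dsimp only
        rw [hv p]
        split_ifs with h
        · exact ⟨by omega, by omega⟩
        · exact hZ p
      · dsimp only; rw [hv j]; split_ifs <;> [omega; exact hj0]
      · intro i' hij
        dsimp only
        rw [hv i', hv j, hc i' hij]
      · intro k l hjk hkl
        have h1 := hi k l hjk hkl
        have h2k := (hne k).1
        have h2l := (hne l).1
        dsimp only
        rw [hv k, hv l]
        split_ifs <;> omega
    · have hid : ∀ p, fOFun i (u p) = u p := fun p => by rw [fOFun, if_neg h2]
      refine ⟨fun p => by dsimp only; rw [hid p]; exact hZ p, j,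
        by dsimp only; rw [hid j]; exact hj0,
        fun i' h => by dsimp only; rw [hid, hid]; exact hc i' h,
        fun k l h h' => by dsimp only; rw [hid, hid]; exact hi k l h h'⟩
  · -- g case
    simp only at hdom ⊢
    have hg : ∀ p, gOFun (u p) = max 0 (u p - 1) := fun p => gOFun_nonneg (hnn p)
    have hZ' : ∀ p : Fin (n+1), gOFun (u p) ∈ Zodd n := by
      intro p
      rw [hg p]
      have := hnn p
      have := hub p
      exact ⟨by omega, by omega⟩
    by_cases h1 : 1 ≤ u j
    · refine ⟨hZ', j, by dsimp only; rw [hg]; omega, ?_, ?_⟩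
      · intro i' h; dsimp only; rw [hg, hg, hc i' h]
      · intro k l hjk hkl
        have hk1 : 1 ≤ u k := le_trans h1 (hmono hjk)
        have := hi k l hjk hkl
        dsimp only; rw [hg, hg]; omega
    · have hj00 : u j = 0 := by omega
      by_cases hjn : j.val = n
      · refine ⟨hZ', j, by dsimp only; rw [hg]; omega, ?_, ?_⟩
        · intro i' h
          have : u i' = u j := hc i' h
          dsimp only; rw [hg, hg]; omega
        · intro k l hjk hkl
          exfalso
          have hl := l.isLt
          have hk : j.val ≤ k.val := hjk
          have : k.val < l.val := hkl
          omega
      · set j' : Fin (n+1) := ⟨j.val + 1, by have := j.isLt; omega⟩ with hj'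
        have hjj' : j < j' := by rw [Fin.lt_def]; simp [hj']
        have huj' : 1 ≤ u j' := by have := hi j j' le_rfl hjj'; omega
        by_cases hone : u j' = 1
        · refine ⟨hZ', j', by dsimp only; rw [hg]; omega, ?_, ?_⟩
          · intro i' h
            dsimp only; rw [hg, hg]
            rcases le_or_gt i' j with h'' | h''
            · have := hc i' h''; omega
            · have : i' = j' := by
                apply Fin.ext
                have ha : (i':ℕ) ≤ j.val + 1 := h
                have hb : j.val < (i':ℕ) := h''
                simp [hj']
                omega
              rw [this]
          · intro k l hjk hkl
            have hjk' : j < k := lt_of_lt_of_le hjj' hjk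
            have h1k : u j' ≤ u k := hmono hjk
            have := hi k l hjk'.le hkl
            dsimp only; rw [hg, hg]; omega
        · refine ⟨hZ', j, by dsimp only; rw [hg]; omega, ?_, ?_⟩
          · intro i' h; dsimp only; rw [hg, hg, hc i' h]
          · intro k l hjk hkl
            dsimp only; rw [hg, hg]
            rcases eq_or_lt_of_le hjk with heq | hjk2
            · have hkl' : j.val < l.val := by rw [heq]; exact hkl
              have hj'l : j' ≤ l := by
                rw [Fin.le_def]; simp [hj']; omega
              have h2l : 2 ≤ u l := by have := hmono hj'l; omega
              have hukj : u k = u j := (heq ▸ rfl : u j = u k).symm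
              omega
            · have hj'k : j' ≤ k := by
                rw [Fin.le_def]
                have : j.val < k.val := hjk2
                simp [hj']; omega
              have h2k : 2 ≤ u k := by have := hmono hj'k; omega
              have := hi k l hjk hkl
              omega

end Main


theorem stmt14 (n : ℕ) (hn : 1 ≤ n) :
    (∀ u ∈ YOdd n, 0 < u 0 →
      InClosureOdd n {v | ∃ k : ℕ, 1 ≤ k ∧ k ≤ n ∧ v = bOdd n k} u) ∧
    (∀ u ∈ YOdd n, u 0 = 0 → InClosureOdd n {bOdd n (n + 1)} u) ∧
    (∀ u ∈ YOdd n, InClosureOdd n {v | ∃ k : ℕ, 1 ≤ k ∧ k ≤ n + 1 ∧ v = bOdd n k} u) ∧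
    (∀ u, InClosureOdd n {v | ∃ k : ℕ, 1 ≤ k ∧ k ≤ n + 1 ∧ v = bOdd n k} u → u ∈ YOdd n) := by
  refine ⟨fun u hu h0 => pos_gen (sN u) u hu le_rfl h0,
          fun u hu h0 => zero_gen (sN u) u hu le_rfl h0, ?_, ?_⟩
  · intro u hu
    have h0 := nonneg_of_Y hu 0
    rcases eq_or_lt_of_le h0 with heq | hlt
    · refine icl_mono ?_ (zero_gen (sN u) u hu le_rfl heq.symm)
      intro v hv
      rw [Set.mem_singleton_iff] at hv
      exact ⟨n+1, by omega, le_rfl, hv⟩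
    · refine icl_mono ?_ (pos_gen (sN u) u hu le_rfl hlt)
      rintro v ⟨k, h1, h2, h3⟩
      exact ⟨k, h1, by omega, h3⟩
  · intro u hcl
    induction hcl with
    | base hb =>
      obtain ⟨k, h1, h2, rfl⟩ := hb
      exact bOdd_mem_Y h1 h2
    | step e he hucl hdom ih => exact Y_pres ih he hdom
end
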